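/- arXiv:2310.07565 — 2 statements merged into one kernel-verified Lean document; each statement's English description precedes it below -/
import Mathlib

section
/- Assume conditions A2(δ) for some δ > 0 and A5. Then there exists a constant c > 0 such that, P-almost surely: (i) sup_{n≥1} sup_{x≠x' ∈ 𝕊₊^{d−1}} |S_n^x − S_n^{x'}| / d(x,x') ≤ c, and (ii) sup_{n≥1} sup_{x≠x' ∈ 𝕊₊^{d−1}} |min_{1≤j≤n} S_j^x − min_{1≤j≤n} S_j^{x'}| / d(x,x') ≤ c. -/
open MeasureTheory ProbabilityTheory Filter Set

noncomputable section

namespace PRM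

/-- The space of `d × d` real matrices, viewed as functions. -/
abbrev Mat (d : ℕ) := Fin d → Fin d → ℝ

variable {d : ℕ}

/-- The norm `|x| = ∑ i |⟨x, e i⟩|` on `ℝ^d`. -/
def vnorm (x : Fin d → ℝ) : ℝ := ∑ i, |x i|

/-- The part `𝕊₊^{d-1}` of the unit sphere lying in the nonnegative quadrant. -/
def sph (d : ℕ) : Set (Fin d → ℝ) := {x | (∀ i, 0 ≤ x i) ∧ vnorm x = 1}

/-- Matrix-vector multiplication. -/
def mulVec (g : Mat d) (x : Fin d → ℝ) : Fin d → ℝ := fun i => ∑ j, g i j * x j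

/-- Matrix multiplication. -/
def matMul (a b : Mat d) : Mat d := fun i j => ∑ k, a i k * b k j

/-- The identity matrix. -/
def idMat (d : ℕ) : Mat d := fun i j => if i = j then 1 else 0

/-- Left product `g (n-1) * ⋯ * g 0` (i.e. `g_n ⋯ g_1` with 1-based indexing). -/
def prodL (g : ℕ → Mat d) : ℕ → Mat d
  | 0 => idMat d
  | n + 1 => matMul (g n) (prodL g n)

/-- The projective action `g · x = g x / |g x|`. -/
def act (g : Mat d) (x : Fin d → ℝ) : Fin d → ℝ := (vnorm (mulVec g x))⁻¹ • mulVec g x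

/-- The matrix norm `‖g‖ = sup_{x ∈ 𝕊₊^{d-1}} |gx|`. -/
def matNorm (g : Mat d) : ℝ := ⨆ x : sph d, vnorm (mulVec g x.val)

/-- `ι(g) = inf_{x ∈ 𝕊₊^{d-1}} |gx|`. -/
def iotaN (g : Mat d) : ℝ := ⨅ x : sph d, vnorm (mulVec g x.val)

/-- `N(g) = max (‖g‖, ι(g)⁻¹)`. -/
def NN (g : Mat d) : ℝ := max (matNorm g) (iotaN g)⁻¹

/-- Transpose of a matrix. -/
def transp (g : Mat d) : Mat d := fun i j => g j i

/-- A matrix is allowable if it has nonnegative entries and every row and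
every column contains a strictly positive entry. -/
def Allow (g : Mat d) : Prop :=
  (∀ i j, 0 ≤ g i j) ∧ (∀ i, ∃ j, 0 < g i j) ∧ (∀ j, ∃ i, 0 < g i j)

variable {Ω : Type*} [MeasurableSpace Ω]

/-- `S_n^x = log |g_n ⋯ g_1 x|`. -/
def Sn (gs : ℕ → Ω → Mat d) (x : Fin d → ℝ) (n : ℕ) (ω : Ω) : ℝ :=
  Real.log (vnorm (mulVec (prodL (fun k => gs k ω) n) x))

/-- `X_n^x = (g_n ⋯ g_1) · x`. -/
def Xn (gs : ℕ → Ω → Mat d) (x : Fin d → ℝ) (n : ℕ) (ω : Ω) : Fin d → ℝ :=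
  act (prodL (fun k => gs k ω) n) x

/-- The event `{τ_{x,y} > n}`, i.e. `y + S_k^x ≥ 0` for `1 ≤ k ≤ n`. -/
def stay (gs : ℕ → Ω → Mat d) (x : Fin d → ℝ) (y : ℝ) (n : ℕ) : Set Ω :=
  {ω | ∀ k, 1 ≤ k → k ≤ n → 0 ≤ y + Sn gs x k ω}

/-- The dual walk `S_n^{x,*} = - log |g_nᵀ ⋯ g_1ᵀ x|`. -/
def SnStar (gs : ℕ → Ω → Mat d) (x : Fin d → ℝ) (n : ℕ) (ω : Ω) : ℝ :=
  - Real.log (vnorm (mulVec (prodL (fun k => transp (gs k ω)) n) x))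

/-- The event `{τ*_{x,y} > n}` for the dual walk. -/
def stayStar (gs : ℕ → Ω → Mat d) (x : Fin d → ℝ) (y : ℝ) (n : ℕ) : Set Ω :=
  {ω | ∀ k, 1 ≤ k → k ≤ n → 0 ≤ y + SnStar gs x k ω}

/-- `(g n)` is an i.i.d. sequence with common law `μ`. -/
def IID (P : Measure Ω) (gs : ℕ → Ω → Mat d) (μ : Measure (Mat d)) : Prop :=
  (∀ n, Measurable (gs n)) ∧ iIndepFun gs P ∧
    ∀ n, Measure.map (gs n) P = μ

/-- Condition A1: with positive probability, some product `g_n ⋯ g_1` has all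
entries strictly positive. -/
def CondA1 (P : Measure Ω) (gs : ℕ → Ω → Mat d) : Prop :=
  0 < P {ω | ∃ n, 1 ≤ n ∧ ∀ i j, 0 < prodL (fun k => gs k ω) n i j}

/-- Condition A2(δ): moment condition `∫ (log N g)^{2+δ} dμ < ∞`. -/
def CondA2 (μ : Measure (Mat d)) (δ : ℝ) : Prop :=
  Integrable (fun g => Real.log (NN g) ^ ((2 : ℝ) + δ)) μ

/-- Condition A3: the Lyapunov exponent vanishes, `S_n^x / n → 0` a.s. -/
def CondA3 (P : Measure Ω) (gs : ℕ → Ω → Mat d) : Prop :=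
  ∀ x ∈ sph d, ∀ᵐ ω ∂P, Tendsto (fun n => Sn gs x n ω / n) atTop (nhds 0)

/-- The support of a measure on a topological space. -/
def msupp {α : Type*} [TopologicalSpace α] [MeasurableSpace α] (m : Measure α) : Set α :=
  {a | ∀ U, IsOpen U → a ∈ U → 0 < m U}

/-- Condition A4: the measure `μ` is non-arithmetic. -/
def CondA4 (μ : Measure (Mat d)) (ν : Measure (Fin d → ℝ)) : Prop :=
  ¬ ∃ (t θ : ℝ) (φ : (Fin d → ℝ) → ℝ), 0 < t ∧ θ ∈ Ico 0 (2 * Real.pi) ∧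
      ContinuousOn φ (sph d) ∧
      ∀ n, 1 ≤ n → ∀ gseq : ℕ → Mat d, (∀ k < n, gseq k ∈ msupp μ) →
        ∀ x ∈ msupp ν,
          Complex.exp (t * Real.log (vnorm (mulVec (prodL gseq n) x)) * Complex.I) *
              (φ (act (prodL gseq n) x) : ℂ) =
            Complex.exp (n * θ * Complex.I) * (φ x : ℂ)

/-- Condition A5 (Furstenberg–Kesten): for `μ`-a.e. `g` the entries of `g` are
positive and `max_{i,j} g^{i,j} ≤ κ · min_{k,l} g^{k,l}`. -/
def CondA5 (μ : Measure (Mat d)) (κ : ℝ) : Prop :=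
  1 < κ ∧ ∀ᵐ g ∂μ, (∀ i j, 0 < g i j) ∧ ∀ i j k l, g i j ≤ κ * g k l

/-- `ν` is a probability measure on `𝕊₊^{d-1}` which is `μ`-invariant. -/
def Invariant (μ : Measure (Mat d)) (ν : Measure (Fin d → ℝ)) : Prop :=
  IsProbabilityMeasure ν ∧ ν (sph d)ᶜ = 0 ∧
    ∀ s : Set (Fin d → ℝ), MeasurableSet s →
      ν s = ∫⁻ g, ν ((fun x => act g x) ⁻¹' s) ∂μ

/-- `σ² = lim (1/n) E[(S_n^x)²]`, with `σ > 0`. -/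
def SigmaLim (P : Measure Ω) (gs : ℕ → Ω → Mat d) (σ : ℝ) : Prop :=
  0 < σ ∧ ∀ x ∈ sph d,
    Tendsto (fun n : ℕ => (∫ ω, (Sn gs x n ω) ^ 2 ∂P) / n) atTop (nhds (σ ^ 2))

/-- `V(x,y) = lim_n E[(y + S_n^x) 1_{τ_{x,y} > n}]`. -/
def VLim (P : Measure Ω) (gs : ℕ → Ω → Mat d) (V : (Fin d → ℝ) → ℝ → ℝ) : Prop :=
  ∀ x ∈ sph d, ∀ y : ℝ,
    Tendsto (fun n => ∫ ω in stay gs x y n, (y + Sn gs x n ω) ∂P) atTop (nhds (V x y))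

/-- `V*(x,y) = lim_n E[(y + S_n^{x,*}) 1_{τ*_{x,y} > n}]`. -/
def VStarLim (P : Measure Ω) (gs : ℕ → Ω → Mat d) (V : (Fin d → ℝ) → ℝ → ℝ) : Prop :=
  ∀ x ∈ sph d, ∀ y : ℝ,
    Tendsto (fun n => ∫ ω in stayStar gs x y n, (y + SnStar gs x n ω) ∂P) atTop
      (nhds (V x y))

/-- The standard normal cumulative distribution function. -/
def gaussCDF (y : ℝ) : ℝ := ∫ t in Iic y, (Real.sqrt (2 * Real.pi))⁻¹ * Real.exp (-t ^ 2 / 2)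

/-- The standard normal density. -/
def gaussDens (u : ℝ) : ℝ := (Real.sqrt (2 * Real.pi))⁻¹ * Real.exp (-u ^ 2 / 2)

/-- `H(y) = 2Φ(y) - 1`. -/
def Hfun (y : ℝ) : ℝ := 2 * gaussCDF y - 1

/-- `ψ(y,z) = (1/√(2π)) (e^{-(y-z)²/2} - e^{-(y+z)²/2})`. -/
def psiF (y z : ℝ) : ℝ :=
  (Real.sqrt (2 * Real.pi))⁻¹ * (Real.exp (-(y - z) ^ 2 / 2) - Real.exp (-(y + z) ^ 2 / 2))

/-- `ℓ(y,z) = ψ(y,z)/H(y)`. -/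
def ellF (y z : ℝ) : ℝ := psiF y z / Hfun y

/-- `L(y) = H(y)/y` for `y ≠ 0`, `L(0) = 2/√(2π)`. -/
def Lfun (y : ℝ) : ℝ := if y = 0 then 2 / Real.sqrt (2 * Real.pi) else Hfun y / y

/-- `V_n(x,y) = V(x,y) L(y/(σ√n))`. -/
def Vnf (V : (Fin d → ℝ) → ℝ → ℝ) (σ : ℝ) (n : ℕ) (x : Fin d → ℝ) (y : ℝ) : ℝ :=
  V x y * Lfun (y / (σ * Real.sqrt n))

/-- `m(x, x') = min_i ⟨x,e_i⟩/⟨x',e_i⟩`. -/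
def mrat (x x' : Fin d → ℝ) : ℝ := ⨅ i, x i / x' i

/-- The Hilbert cross-ratio metric on `𝕊₊^{d-1}`. -/
def hdist (x x' : Fin d → ℝ) : ℝ :=
  (1 - mrat x x' * mrat x' x) / (1 + mrat x x' * mrat x' x)

/-- `‖φ‖_∞` over the sphere. -/
def supNorm (φ : (Fin d → ℝ) → ℝ) : ℝ := ⨆ x : sph d, |φ x.val|

/-- The norm `‖φ‖_𝓑 = ‖φ‖_∞ + sup_{x ≠ x'} |φ(x) - φ(x')| / d(x,x')`. -/
def bNorm (φ : (Fin d → ℝ) → ℝ) : ℝ :=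
  supNorm φ + ⨆ p : {p : sph d × sph d // p.1 ≠ p.2},
    |φ p.val.1.val - φ p.val.2.val| / hdist p.val.1.val p.val.2.val

/-- Membership in the Banach space `𝓑` of bounded Lipschitz functions. -/
def memB (φ : (Fin d → ℝ) → ℝ) : Prop :=
  ContinuousOn φ (sph d) ∧ (∃ C, ∀ x ∈ sph d, |φ x| ≤ C) ∧
    ∃ C, ∀ x ∈ sph d, ∀ x' ∈ sph d, |φ x - φ x'| ≤ C * hdist x x'

/-- `‖F‖_𝓗 = ∫ ‖F(·,y)‖_𝓑 dy`. -/
def HNorm (F : (Fin d → ℝ) → ℝ → ℝ) : ℝ := ∫ y, bNorm (fun x => F x y)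

/-- Membership in the class `𝓗`. -/
def memH (F : (Fin d → ℝ) → ℝ → ℝ) : Prop :=
  Integrable (fun y => bNorm (fun x => F x y)) ∧
    (∀ y, ∃ C, ∀ x ∈ sph d, ∀ x' ∈ sph d, |F x y - F x' y| ≤ C * hdist x x') ∧
    ∀ x, Measurable fun y => F x y

/-- `‖F‖_{ν ⊗ Leb} = ∫∫ |F(x,y)| ν(dx) dy`. -/
def nuLeb (ν : Measure (Fin d → ℝ)) (F : (Fin d → ℝ) → ℝ → ℝ) : ℝ :=
  ∫ x, (∫ y, |F x y|) ∂ν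

/-- `F ≤_ε H`: `F(x,y) ≤ H(x, y + v)` for all `x ∈ 𝕊₊^{d-1}`, `y ∈ ℝ`, `|v| ≤ ε`. -/
def domBy (ε : ℝ) (F H : (Fin d → ℝ) → ℝ → ℝ) : Prop :=
  ∀ x ∈ sph d, ∀ y v : ℝ, |v| ≤ ε → F x y ≤ H x (y + v)

/-- `min_{1 ≤ j ≤ n} S_j^x`. -/
def minS (gs : ℕ → Ω → Mat d) (x : Fin d → ℝ) (n : ℕ) (ω : Ω) : ℝ :=
  ⨅ j : Fin n, Sn gs x (j.val + 1) ω


section Aux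

variable {d : ℕ}

lemma vnorm_mulVec_eq (A : Mat d) (hA : ∀ i j, 0 ≤ A i j)
    (x : Fin d → ℝ) (hx : ∀ i, 0 ≤ x i) :
    vnorm (mulVec A x) = ∑ j, (∑ i, A i j) * x j := by
  unfold vnorm mulVec
  have h1 : ∀ i : Fin d, |∑ j, A i j * x j| = ∑ j, A i j * x j := fun i =>
    abs_of_nonneg (Finset.sum_nonneg fun j _ => mul_nonneg (hA i j) (hx j))
  simp_rw [h1, Finset.sum_mul]
  exact Finset.sum_comm

lemma sum_eq_one_of_sph {x : Fin d → ℝ} (hx : x ∈ sph d) : ∑ j, x j = 1 := by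
  have h := hx.2
  unfold vnorm at h
  rw [← h]
  exact Finset.sum_congr rfl fun j _ => (abs_of_nonneg (hx.1 j)).symm

lemma mrat_nonneg [Nonempty (Fin d)] {x x' : Fin d → ℝ}
    (hx : ∀ i, 0 ≤ x i) (hx' : ∀ i, 0 ≤ x' i) : 0 ≤ mrat x x' :=
  le_ciInf fun i => div_nonneg (hx i) (hx' i)

lemma mrat_le_one [Nonempty (Fin d)] {x x' : Fin d → ℝ}
    (hx : x ∈ sph d) (hx' : x' ∈ sph d) : mrat x x' ≤ 1 := by
  by_contra h
  push_neg at h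
  have hlt : ∀ i : Fin d, x' i < x i := by
    intro i
    have hle : mrat x x' ≤ x i / x' i := ciInf_le (Finite.bddBelow_range _) i
    have h1 : 1 < x i / x' i := lt_of_lt_of_le h hle
    rcases lt_or_eq_of_le (hx'.1 i) with hp | hz
    · rw [lt_div_iff₀ hp, one_mul] at h1
      exact h1
    · rw [← hz, div_zero] at h1; linarith
  have hcon : (1:ℝ) < 1 := by
    calc (1:ℝ) = ∑ j, x' j := (sum_eq_one_of_sph hx').symm
    _ < ∑ j, x j := Finset.sum_lt_sum_of_nonempty Finset.univ_nonempty fun i _ => hlt i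
    _ = 1 := sum_eq_one_of_sph hx
  linarith

set_option maxHeartbeats 1000000 in
/-- Key deterministic contraction estimate. -/
lemma key_contraction (hd : 1 ≤ d) (κ : ℝ) (hκ : 1 < κ) (A : Mat d)
    (hpos : ∀ i j, 0 < A i j) (hrat : ∀ i j l, A i j ≤ κ * A i l)
    {x x' : Fin d → ℝ} (hx : x ∈ sph d) (hx' : x' ∈ sph d) :
    |Real.log (vnorm (mulVec A x)) - Real.log (vnorm (mulVec A x'))|
      ≤ (4 + 3 * Real.log κ) * hdist x x' := by
  have hne : Nonempty (Fin d) := ⟨⟨0, hd⟩⟩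
  have hκ0 : (0:ℝ) < κ := by linarith
  have hlogκ : 0 < Real.log κ := Real.log_pos hκ
  set c : Fin d → ℝ := fun j => ∑ i, A i j with hc
  have hcpos : ∀ j, 0 < c j := fun j => Finset.sum_pos (fun i _ => hpos i j) Finset.univ_nonempty
  have hcrat : ∀ j l, c j ≤ κ * c l := by
    intro j l
    rw [hc]
    simp only
    rw [Finset.mul_sum]
    exact Finset.sum_le_sum fun i _ => hrat i j l
  set s : ℝ := vnorm (mulVec A x) with hs
  set s' : ℝ := vnorm (mulVec A x') with hs'
  have hseq : s = ∑ j, c j * x j := by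
    rw [hs]; exact vnorm_mulVec_eq A (fun i j => (hpos i j).le) x hx.1
  have hseq' : s' = ∑ j, c j * x' j := by
    rw [hs']; exact vnorm_mulVec_eq A (fun i j => (hpos i j).le) x' hx'.1
  have l0 : Fin d := ⟨0, hd⟩
  have hub : ∀ z : Fin d → ℝ, z ∈ sph d → ∀ l, ∑ j, c j * z j ≤ κ * c l := by
    intro z hz l
    calc ∑ j, c j * z j ≤ ∑ j, (κ * c l) * z j :=
          Finset.sum_le_sum fun j _ => mul_le_mul_of_nonneg_right (hcrat j l) (hz.1 j)
      _ = (κ * c l) * ∑ j, z j := (Finset.mul_sum _ _ _).symm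
      _ = κ * c l := by rw [sum_eq_one_of_sph hz, mul_one]
  have hlb : ∀ (u : ℝ) (z : Fin d → ℝ), z ∈ sph d →
      (∀ l, u ≤ κ * c l) → u / κ ≤ ∑ j, c j * z j := by
    intro u z hz hu
    calc u / κ = (u / κ) * ∑ j, z j := by rw [sum_eq_one_of_sph hz, mul_one]
      _ = ∑ j, (u / κ) * z j := Finset.mul_sum _ _ _
      _ ≤ ∑ j, c j * z j := Finset.sum_le_sum fun j _ => by
          refine mul_le_mul_of_nonneg_right ?_ (hz.1 j)
          rw [div_le_iff₀ hκ0, mul_comm]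
          exact hu j
  have hspos : 0 < s := by
    rw [hseq]
    exact lt_of_lt_of_le (div_pos (hcpos l0) hκ0) (hlb _ x hx (hcrat l0))
  have hspos' : 0 < s' := by
    rw [hseq']
    exact lt_of_lt_of_le (div_pos (hcpos l0) hκ0) (hlb _ x' hx' (hcrat l0))
  have hcomp : ∀ (z z' : Fin d → ℝ), z ∈ sph d → z' ∈ sph d →
      ∑ j, c j * z j ≤ κ * ∑ j, c j * z' j := by
    intro z z' hz hz'
    have h1 : (∑ j, c j * z j) / κ ≤ ∑ j, c j * z' j := hlb _ z' hz' (hub z hz)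
    rw [div_le_iff₀ hκ0] at h1
    linarith [h1]
  have hsk : s ≤ κ * s' := by rw [hseq, hseq']; exact hcomp x x' hx hx'
  have hsk' : s' ≤ κ * s := by rw [hseq, hseq']; exact hcomp x' x hx' hx
  have hlog1 : Real.log s - Real.log s' ≤ Real.log κ := by
    have := Real.log_le_log hspos hsk
    rw [Real.log_mul (ne_of_gt hκ0) (ne_of_gt hspos')] at this
    linarith
  have hlog2 : Real.log s' - Real.log s ≤ Real.log κ := by
    have := Real.log_le_log hspos' hsk'
    rw [Real.log_mul (ne_of_gt hκ0) (ne_of_gt hspos)] at this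
    linarith
  set m : ℝ := mrat x x' with hm
  set m' : ℝ := mrat x' x with hm'
  set t : ℝ := m * m' with htt
  have hdeq : hdist x x' = (1 - t) / (1 + t) := rfl
  have hm0 : 0 ≤ m := mrat_nonneg hx.1 hx'.1
  have hm'0 : 0 ≤ m' := mrat_nonneg hx'.1 hx.1
  have ht0 : 0 ≤ t := mul_nonneg hm0 hm'0
  have hm1 : m ≤ 1 := mrat_le_one hx hx'
  have hm'1 : m' ≤ 1 := mrat_le_one hx' hx
  have ht1 : t ≤ 1 := by nlinarith
  by_cases ht : 1/2 ≤ t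
  · -- close case
    have hmpos : 0 < m := by
      rcases lt_or_eq_of_le hm0 with h | h
      · exact h
      · exfalso; rw [htt, ← h, zero_mul] at ht; linarith
    have hm'pos : 0 < m' := by
      rcases lt_or_eq_of_le hm'0 with h | h
      · exact h
      · exfalso; rw [htt, ← h, mul_zero] at ht; linarith
    have hx'pos : ∀ i, 0 < x' i := by
      intro i
      rcases lt_or_eq_of_le (hx'.1 i) with h | h
      · exact h
      · exfalso
        have hle : m ≤ x i / x' i := ciInf_le (Finite.bddBelow_range _) i
        rw [← h, div_zero] at hle
        linarith
    have hxpos : ∀ i, 0 < x i := by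
      intro i
      rcases lt_or_eq_of_le (hx.1 i) with h | h
      · exact h
      · exfalso
        have hle : m' ≤ x' i / x i := ciInf_le (Finite.bddBelow_range _) i
        rw [← h, div_zero] at hle
        linarith
    have hxm : ∀ i, m * x' i ≤ x i := by
      intro i
      have hle : m ≤ x i / x' i := ciInf_le (Finite.bddBelow_range _) i
      rw [le_div_iff₀ (hx'pos i)] at hle
      linarith
    have hxm' : ∀ i, m' * x i ≤ x' i := by
      intro i
      have hle : m' ≤ x' i / x i := ciInf_le (Finite.bddBelow_range _) i
      rw [le_div_iff₀ (hxpos i)] at hle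
      linarith
    have hms : m * s' ≤ s := by
      rw [hseq, hseq', Finset.mul_sum]
      refine Finset.sum_le_sum fun j _ => ?_
      calc m * (c j * x' j) = c j * (m * x' j) := by ring
        _ ≤ c j * x j := mul_le_mul_of_nonneg_left (hxm j) (hcpos j).le
    have hms' : m' * s ≤ s' := by
      rw [hseq, hseq', Finset.mul_sum]
      refine Finset.sum_le_sum fun j _ => ?_
      calc m' * (c j * x j) = c j * (m' * x j) := by ring
        _ ≤ c j * x' j := mul_le_mul_of_nonneg_left (hxm' j) (hcpos j).le
    have htpos : 0 < t := by linarith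
    have hla : Real.log t ≤ Real.log s - Real.log s' := by
      have h1 : Real.log (m * s') ≤ Real.log s := Real.log_le_log (mul_pos hmpos hspos') hms
      rw [Real.log_mul (ne_of_gt hmpos) (ne_of_gt hspos')] at h1
      have h2 : Real.log t ≤ Real.log m := by
        refine Real.log_le_log htpos ?_
        nlinarith
      linarith
    have hlb2 : Real.log t ≤ Real.log s' - Real.log s := by
      have h1 : Real.log (m' * s) ≤ Real.log s' := Real.log_le_log (mul_pos hm'pos hspos) hms'
      rw [Real.log_mul (ne_of_gt hm'pos) (ne_of_gt hspos)] at h1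
      have h2 : Real.log t ≤ Real.log m' := by
        refine Real.log_le_log htpos ?_
        nlinarith
      linarith
    have hnl : -Real.log t ≤ (1 - t) / t := by
      have h1 : Real.log t⁻¹ ≤ t⁻¹ - 1 := Real.log_le_sub_one_of_pos (inv_pos.mpr htpos)
      rw [Real.log_inv] at h1
      have h2 : t⁻¹ - 1 = (1 - t) / t := by field_simp
      linarith [h2 ▸ h1]
    have hfrac : (1 - t) / t ≤ 2 * (1 - t) := by
      rw [div_le_iff₀ htpos]
      nlinarith
    have habs : |Real.log s - Real.log s'| ≤ 2 * (1 - t) := by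
      rw [abs_sub_le_iff]
      constructor <;> linarith
    have hhd : (1 - t) / 2 ≤ (1 - t) / (1 + t) := by
      rw [div_le_div_iff₀ (by norm_num) (by linarith)]
      nlinarith
    have hhd0 : 0 ≤ (1 - t) / (1 + t) := div_nonneg (by linarith) (by linarith)
    have hmul : 0 ≤ Real.log κ * ((1 - t) / (1 + t)) := mul_nonneg hlogκ.le hhd0
    rw [hdeq]
    linarith
  · -- far case
    push_neg at ht
    have hhd : (1:ℝ)/3 ≤ (1 - t) / (1 + t) := by
      rw [le_div_iff₀ (by linarith : (0:ℝ) < 1 + t)]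
      linarith
    have habs : |Real.log s - Real.log s'| ≤ Real.log κ := by
      rw [abs_sub_le_iff]; exact ⟨hlog1, hlog2⟩
    have hmul : Real.log κ * (1/3) ≤ Real.log κ * ((1 - t) / (1 + t)) :=
      mul_le_mul_of_nonneg_left hhd hlogκ.le
    rw [hdeq]
    linarith

/-- Row-ratio property of left products. -/
lemma Q_prodL [Nonempty (Fin d)] (κ : ℝ) (hκ : 1 ≤ κ) (g : ℕ → Mat d)
    (hg : ∀ k, (∀ i j, 0 < g k i j) ∧ ∀ i j k' l, g k i j ≤ κ * g k k' l) :
    ∀ n, 1 ≤ n →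
      (∀ i j, 0 < prodL g n i j) ∧ ∀ i j l, prodL g n i j ≤ κ * prodL g n i l := by
  intro n hn
  induction n with
  | zero => omega
  | succ n ih =>
    rcases Nat.eq_or_lt_of_le hn with h1 | h1
    · -- n + 1 = 1
      have hn0 : n = 0 := by omega
      subst hn0
      have hId : prodL g 1 = g 0 := by
        show matMul (g 0) (prodL g 0) = g 0
        funext i j
        show ∑ k, g 0 i k * (if k = j then (1:ℝ) else 0) = g 0 i j
        simp [mul_ite]
      rw [hId]
      exact ⟨(hg 0).1, fun i j l => (hg 0).2 i j i l⟩
    · have hn' : 1 ≤ n := by omega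
      obtain ⟨ihpos, ihrat⟩ := ih hn'
      constructor
      · intro i j
        refine Finset.sum_pos (fun k _ => mul_pos ((hg n).1 i k) (ihpos k j))
          Finset.univ_nonempty
      · intro i j l
        show ∑ k, g n i k * prodL g n k j ≤ κ * ∑ k, g n i k * prodL g n k l
        rw [Finset.mul_sum]
        refine Finset.sum_le_sum fun k _ => ?_
        calc g n i k * prodL g n k j ≤ g n i k * (κ * prodL g n k l) :=
              mul_le_mul_of_nonneg_left (ihrat k j l) ((hg n).1 i k).le
          _ = κ * (g n i k * prodL g n k l) := by ring

lemma ciInf_abs_sub {n : ℕ} (hn : 1 ≤ n) (f g : Fin n → ℝ) (C : ℝ)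
    (h : ∀ j, |f j - g j| ≤ C) : |(⨅ j, f j) - ⨅ j, g j| ≤ C := by
  have : Nonempty (Fin n) := ⟨⟨0, hn⟩⟩
  have h1 : (⨅ j, f j) - C ≤ ⨅ j, g j := by
    refine le_ciInf fun j => ?_
    have h2 : (⨅ i, f i) ≤ f j := ciInf_le (Finite.bddBelow_range _) j
    have h3 := abs_le.mp (h j)
    linarith [h3.1, h3.2]
  have h4 : (⨅ j, g j) - C ≤ ⨅ j, f j := by
    refine le_ciInf fun j => ?_
    have h2 : (⨅ i, g i) ≤ g j := ciInf_le (Finite.bddBelow_range _) j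
    have h3 := abs_le.mp (h j)
    linarith [h3.1, h3.2]
  rw [abs_sub_le_iff]
  constructor <;> linarith

end Aux

theorem as_contraction_FK
    (hd : 2 ≤ d) (P : Measure Ω) [IsProbabilityMeasure P]
    (gs : ℕ → Ω → Mat d) (μ : Measure (Mat d)) [IsProbabilityMeasure μ]
    (hiid : IID P gs μ) (hallow : ∀ᵐ g ∂μ, Allow g)
    (δ : ℝ) (hδ : 0 < δ) (hA2 : CondA2 μ δ) (κ : ℝ) (hA5 : CondA5 μ κ) :
    ∃ c : ℝ, 0 < c ∧ ∀ᵐ ω ∂P, ∀ n : ℕ, 1 ≤ n → ∀ x ∈ sph d, ∀ x' ∈ sph d,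
      |Sn gs x n ω - Sn gs x' n ω| ≤ c * hdist x x' ∧
      |minS gs x n ω - minS gs x' n ω| ≤ c * hdist x x'  := by
  obtain ⟨hκ, hA5ae⟩ := hA5
  have hd1 : 1 ≤ d := by omega
  have hne : Nonempty (Fin d) := ⟨⟨0, hd1⟩⟩
  refine ⟨4 + 3 * Real.log κ, by have := Real.log_pos hκ; linarith, ?_⟩
  have hev : ∀ i j : Fin d, Measurable fun g : Mat d => g i j :=
    fun i j => (measurable_pi_apply j).comp (measurable_pi_apply i)
  have hmeas : MeasurableSet
      {g : Mat d | (∀ i j, 0 < g i j) ∧ ∀ i j k l, g i j ≤ κ * g k l} := by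
    have hset : {g : Mat d | (∀ i j, 0 < g i j) ∧ ∀ i j k l, g i j ≤ κ * g k l}
        = (⋂ i, ⋂ j, {g : Mat d | 0 < g i j}) ∩
          (⋂ i, ⋂ j, ⋂ k, ⋂ l, {g : Mat d | g i j ≤ κ * g k l}) := by
      ext g; simp [Set.mem_iInter]
    rw [hset]
    refine MeasurableSet.inter ?_ ?_
    · exact MeasurableSet.iInter fun i => MeasurableSet.iInter fun j =>
        measurableSet_lt measurable_const (hev i j)
    · exact MeasurableSet.iInter fun i => MeasurableSet.iInter fun j =>
        MeasurableSet.iInter fun k => MeasurableSet.iInter fun l =>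
          measurableSet_le (hev i j) (measurable_const.mul (hev k l))
  have hae : ∀ k, ∀ᵐ ω ∂P,
      (∀ i j, 0 < gs k ω i j) ∧ ∀ i j k' l, gs k ω i j ≤ κ * gs k ω k' l := by
    intro k
    have h := hA5ae
    rw [← hiid.2.2 k] at h
    exact (MeasureTheory.ae_map_iff (hiid.1 k).aemeasurable hmeas).mp h
  have hgood : ∀ᵐ ω ∂P, ∀ k,
      (∀ i j, 0 < gs k ω i j) ∧ ∀ i j k' l, gs k ω i j ≤ κ * gs k ω k' l :=
    ae_all_iff.mpr hae
  filter_upwards [hgood] with ω hω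
  intro n hn x hx x' hx'
  have hQ := Q_prodL κ hκ.le (fun k => gs k ω) hω
  constructor
  · exact key_contraction hd1 κ hκ _ (hQ n hn).1 (hQ n hn).2 hx hx'
  · have hj : ∀ j : Fin n, |Sn gs x (j.1 + 1) ω - Sn gs x' (j.1 + 1) ω|
        ≤ (4 + 3 * Real.log κ) * hdist x x' := fun j =>
      key_contraction hd1 κ hκ _ (hQ (j.1 + 1) (by omega)).1
        (hQ (j.1 + 1) (by omega)).2 hx hx'
    exact ciInf_abs_sub hn _ _ _ hj

end PRM
end
end

section
/- Assume condition A5 with constant κ > 1 and set γ = 2 log κ + log d. Then, P-almost surely, for every n ≥ 1, every x ∈ 𝕊₊^{d−1} and every 0 ≤ k ≤ n: S_{n−k}^{x,*} − γ ≤ S_k^x − S_n^x ≤ S_{n−k}^{x,*} + γ, where S_i^{x,*} = −log|g_{n−i+1}^T g_{n−i+2}^T ⋯ g_n^T x| is the dual walk built from the transposed matrices taken in reversed order (and S_0^x = S_0^{x,*} = 0). -/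
open MeasureTheory ProbabilityTheory Filter Set

noncomputable section

namespace PRM

variable {d : ℕ}

variable {Ω : Type*} [MeasurableSpace Ω]

/-- The reversed dual walk `S_i^{x,*} = - log |g_{n-i+1}ᵀ ⋯ g_nᵀ x|`, built
from the transposed matrices taken in reversed order within the first `n`. -/
def Sdrev {Ω : Type*} {d : ℕ} (gs : ℕ → Ω → Mat d) (n : ℕ) (x : Fin d → ℝ)
    (i : ℕ) (ω : Ω) : ℝ :=
  - Real.log (vnorm (mulVec (prodL (fun j => transp (gs (n - 1 - j) ω)) i) x))

/-! ### Auxiliary lemmas for the duality theorem -/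

lemma matMul_idMat (a : Mat d) : matMul a (idMat d) = a := by
  funext i j
  simp [matMul, idMat, mul_ite, mul_one, mul_zero]

lemma idMat_matMul (a : Mat d) : matMul (idMat d) a = a := by
  funext i j
  simp [matMul, idMat, ite_mul, one_mul, zero_mul]

lemma matMul_assoc (a b c : Mat d) : matMul (matMul a b) c = matMul a (matMul b c) := by
  funext i j
  simp only [matMul, Finset.sum_mul, Finset.mul_sum]
  rw [Finset.sum_comm]
  exact Finset.sum_congr rfl fun l _ => Finset.sum_congr rfl fun m _ => by ring

lemma mulVec_idMat (x : Fin d → ℝ) : mulVec (idMat d) x = x := by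
  funext i
  simp [mulVec, idMat, ite_mul, one_mul, zero_mul]

lemma mulVec_matMul (a b : Mat d) (x : Fin d → ℝ) :
    mulVec (matMul a b) x = mulVec a (mulVec b x) := by
  funext i
  simp only [mulVec, matMul, Finset.sum_mul, Finset.mul_sum]
  rw [Finset.sum_comm]
  exact Finset.sum_congr rfl fun l _ => Finset.sum_congr rfl fun m _ => by ring

lemma transp_idMat : transp (idMat d) = idMat d := by
  funext i j
  simp [transp, idMat, eq_comm]

lemma transp_matMul (a b : Mat d) : transp (matMul a b) = matMul (transp b) (transp a) := by
  funext i j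
  simp only [transp, matMul]
  exact Finset.sum_congr rfl fun l _ => by ring

lemma prodL_congr {f f' : ℕ → Mat d} : ∀ m, (∀ j < m, f j = f' j) → prodL f m = prodL f' m
  | 0, _ => rfl
  | m + 1, h => by
      simp only [prodL]
      rw [prodL_congr m fun j hj => h j (Nat.lt_succ_of_lt hj), h m (Nat.lt_succ_self m)]

lemma prodL_succ' (f : ℕ → Mat d) : ∀ m, prodL f (m + 1) = matMul (prodL (fun j => f (j + 1)) m) (f 0)
  | 0 => by simp [prodL, matMul_idMat, idMat_matMul]
  | m + 1 => by
      show matMul (f (m + 1)) (prodL f (m + 1)) = _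
      rw [prodL_succ' f m, ← matMul_assoc]
      rfl

lemma prodL_add (h : ℕ → Mat d) (k : ℕ) :
    ∀ m, prodL h (m + k) = matMul (prodL (fun j => h (k + j)) m) (prodL h k)
  | 0 => by simp [prodL, idMat_matMul]
  | m + 1 => by
      have e : m + 1 + k = (m + k) + 1 := by omega
      rw [e]
      show matMul (h (m + k)) (prodL h (m + k)) = _
      rw [prodL_add h k m]
      show _ = matMul (matMul (h (k + m)) (prodL (fun j => h (k + j)) m)) (prodL h k)
      rw [matMul_assoc, Nat.add_comm m k]

lemma prodL_transp_rev (h : ℕ → Mat d) :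
    ∀ m a, prodL (fun j => transp (h (a + (m - 1 - j)))) m = transp (prodL (fun j => h (a + j)) m)
  | 0, a => by simp [prodL, transp_idMat]
  | m + 1, a => by
      have hR : prodL (fun j => h (a + j)) (m + 1)
          = matMul (prodL (fun j => h (a + 1 + j)) m) (h a) := by
        rw [prodL_succ' (fun j => h (a + j)) m, Nat.add_zero]
        have e : prodL (fun j => h (a + (j + 1))) m = prodL (fun j => h (a + 1 + j)) m := by
          apply prodL_congr
          intro j _
          have e' : a + (j + 1) = a + 1 + j := by omega
          rw [e']
        exact congrArg (fun M => matMul M (h a)) e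
      have hL : prodL (fun j => transp (h (a + (m + 1 - 1 - j)))) m
          = prodL (fun j => transp (h (a + 1 + (m - 1 - j)))) m := by
        apply prodL_congr
        intro j hj
        have e : a + (m + 1 - 1 - j) = a + 1 + (m - 1 - j) := by omega
        rw [e]
      have e2 : a + (m + 1 - 1 - m) = a := by omega
      show matMul (transp (h (a + (m + 1 - 1 - m))))
          (prodL (fun j => transp (h (a + (m + 1 - 1 - j)))) m) = _
      rw [hL, prodL_transp_rev h m (a + 1), e2, hR, transp_matMul]

lemma prodL_nonneg (f : ℕ → Mat d) (hf : ∀ j i i', 0 ≤ f j i i') :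
    ∀ m i j, 0 ≤ prodL f m i j
  | 0, i, j => by unfold prodL idMat; positivity
  | m + 1, i, j => by
      show (0:ℝ) ≤ ∑ l, f m i l * prodL f m l j
      exact Finset.sum_nonneg fun l _ => mul_nonneg (hf m i l) (prodL_nonneg f hf m l j)

/-- Entrywise bounds for products of Furstenberg–Kesten matrices. -/
lemma prodL_good (hd0 : 0 < d) {κ : ℝ} (hκ : 0 < κ) (f : ℕ → Mat d)
    (hf : ∀ m, (∀ i j, 0 < f m i j) ∧ ∀ i j i' j', f m i j ≤ κ * f m i' j') :
    ∀ m, 1 ≤ m →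
      (∀ i j, 0 < prodL f m i j) ∧ (∀ i i' j, prodL f m i j ≤ κ * prodL f m i' j) ∧
        (∀ i j j', prodL f m i j ≤ κ * prodL f m i j') := by
  haveI : Nonempty (Fin d) := Fin.pos_iff_nonempty.mp hd0
  intro m hm
  induction m, hm using Nat.le_induction with
  | base =>
      have h1 : prodL f 1 = f 0 := by
        show matMul (f 0) (prodL f 0) = f 0
        exact matMul_idMat (f 0)
      rw [h1]
      exact ⟨(hf 0).1, fun i i' j => (hf 0).2 i j i' j, fun i j j' => (hf 0).2 i j i j'⟩
  | succ m hm ih =>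
      obtain ⟨hp, hr, hc⟩ := ih
      have hP : ∀ i j, prodL f (m + 1) i j = ∑ l, f m i l * prodL f m l j := fun i j => rfl
      refine ⟨?_, ?_, ?_⟩
      · intro i j
        rw [hP]
        exact Finset.sum_pos (fun l _ => mul_pos ((hf m).1 i l) (hp l j)) Finset.univ_nonempty
      · intro i i' j
        rw [hP, hP, Finset.mul_sum]
        refine Finset.sum_le_sum fun l _ => ?_
        rw [← mul_assoc]
        exact mul_le_mul_of_nonneg_right ((hf m).2 i l i' l) (hp l j).le
      · intro i j j'
        rw [hP, hP, Finset.mul_sum]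
        refine Finset.sum_le_sum fun l _ => ?_
        calc f m i l * prodL f m l j ≤ f m i l * (κ * prodL f m l j') :=
              mul_le_mul_of_nonneg_left (hc l j j') ((hf m).1 i l).le
          _ = κ * (f m i l * prodL f m l j') := by ring

lemma vnorm_eq_sum {y : Fin d → ℝ} (hy : ∀ i, 0 ≤ y i) : vnorm y = ∑ i, y i :=
  Finset.sum_congr rfl fun i _ => abs_of_nonneg (hy i)

lemma mulVec_nonneg {C : Mat d} (hC : ∀ i j, 0 ≤ C i j) {y : Fin d → ℝ}
    (hy : ∀ i, 0 ≤ y i) : ∀ i, 0 ≤ mulVec C y i := fun i =>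
  Finset.sum_nonneg fun j _ => mul_nonneg (hC i j) (hy j)

/-- The key norm sandwich: for a matrix with entries comparable up to `K`,
`|Cy|` and `|y|·|Cᵀx|` differ by at most a factor `K`. -/
lemma sandwich (hd0 : 0 < d) {K : ℝ} (hK : 0 < K) (C : Mat d)
    (hCpos : ∀ i j, 0 < C i j) (hrat : ∀ i j i' j', C i j ≤ K * C i' j')
    (x y : Fin d → ℝ) (hx : ∀ i, 0 ≤ x i) (hx1 : ∑ i, x i = 1)
    (hy : ∀ j, 0 ≤ y j) (hvy : 0 < vnorm y) :
    vnorm (mulVec C y) ≤ K * (vnorm y * vnorm (mulVec (transp C) x)) ∧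
      vnorm y * vnorm (mulVec (transp C) x) ≤ K * vnorm (mulVec C y) ∧
      0 < vnorm (mulVec (transp C) x) ∧ 0 < vnorm (mulVec C y) := by
  haveI : Nonempty (Fin d) := Fin.pos_iff_nonempty.mp hd0
  obtain ⟨p, -, hmax⟩ := Finset.exists_max_image (Finset.univ : Finset (Fin d × Fin d))
    (fun q => C q.1 q.2) Finset.univ_nonempty
  set c := C p.1 p.2 with hcdef
  have hc : 0 < c := hCpos p.1 p.2
  have hub : ∀ i j, C i j ≤ c := fun i j => hmax (i, j) (Finset.mem_univ _)
  have hlb : ∀ i j, c ≤ K * C i j := fun i j => hrat p.1 p.2 i j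
  have hvy' : vnorm y = ∑ j, y j := vnorm_eq_sum hy
  have hvCy : vnorm (mulVec C y) = ∑ i, ∑ j, C i j * y j :=
    Finset.sum_congr rfl fun i _ => abs_of_nonneg (mulVec_nonneg (fun i j => (hCpos i j).le) hy i)
  have hvCt : vnorm (mulVec (transp C) x) = ∑ j, ∑ i, C i j * x i :=
    Finset.sum_congr rfl fun j _ =>
      abs_of_nonneg (Finset.sum_nonneg fun i _ => mul_nonneg (hCpos i j).le (hx i))
  -- B1 : |Cy| ≤ d * (c * |y|)
  have B1 : vnorm (mulVec C y) ≤ (d : ℝ) * (c * vnorm y) := by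
    rw [hvCy, hvy']
    calc ∑ i, ∑ j, C i j * y j ≤ ∑ _i : Fin d, ∑ j, c * y j :=
          Finset.sum_le_sum fun i _ => Finset.sum_le_sum fun j _ =>
            mul_le_mul_of_nonneg_right (hub i j) (hy j)
      _ = (d : ℝ) * (c * ∑ j, y j) := by
          rw [Finset.sum_const, ← Finset.mul_sum]
          simp [Fintype.card_fin, nsmul_eq_mul]
  -- B4 : d * (c * |y|) ≤ K * |Cy|
  have B4 : (d : ℝ) * (c * vnorm y) ≤ K * vnorm (mulVec C y) := by
    rw [hvCy, hvy']
    calc (d : ℝ) * (c * ∑ j, y j) = ∑ _i : Fin d, ∑ j, c * y j := by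
          rw [Finset.sum_const, ← Finset.mul_sum]
          simp [Fintype.card_fin, nsmul_eq_mul]
      _ ≤ ∑ i, ∑ j, K * (C i j * y j) :=
          Finset.sum_le_sum fun i _ => Finset.sum_le_sum fun j _ => by
            rw [← mul_assoc]
            exact mul_le_mul_of_nonneg_right (hlb i j) (hy j)
      _ = K * ∑ i, ∑ j, C i j * y j := by
          rw [Finset.mul_sum]
          exact Finset.sum_congr rfl fun i _ => (Finset.mul_sum _ _ _).symm
  -- B3 : |Cᵀx| ≤ d * c
  have B3 : vnorm (mulVec (transp C) x) ≤ (d : ℝ) * c := by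
    rw [hvCt]
    calc ∑ j, ∑ i, C i j * x i ≤ ∑ _j : Fin d, ∑ i, c * x i :=
          Finset.sum_le_sum fun j _ => Finset.sum_le_sum fun i _ =>
            mul_le_mul_of_nonneg_right (hub i j) (hx i)
      _ = (d : ℝ) * c := by
          rw [Finset.sum_const, ← Finset.mul_sum, hx1]
          simp [Fintype.card_fin, nsmul_eq_mul]
  -- B2 : d * c ≤ K * |Cᵀx|
  have B2 : (d : ℝ) * c ≤ K * vnorm (mulVec (transp C) x) := by
    rw [hvCt]
    calc (d : ℝ) * c = ∑ _j : Fin d, ∑ i, c * x i := by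
          rw [Finset.sum_const, ← Finset.mul_sum, hx1]
          simp [Fintype.card_fin, nsmul_eq_mul]
      _ ≤ ∑ j, ∑ i, K * (C i j * x i) :=
          Finset.sum_le_sum fun j _ => Finset.sum_le_sum fun i _ => by
            rw [← mul_assoc]
            exact mul_le_mul_of_nonneg_right (hlb i j) (hx i)
      _ = K * ∑ j, ∑ i, C i j * x i := by
          rw [Finset.mul_sum]
          exact Finset.sum_congr rfl fun j _ => (Finset.mul_sum _ _ _).symm
  have hd' : (0:ℝ) < d := Nat.cast_pos.mpr hd0
  have hposCt : 0 < vnorm (mulVec (transp C) x) := by nlinarith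
  have hposCy : 0 < vnorm (mulVec C y) := by nlinarith
  refine ⟨?_, ?_, hposCt, hposCy⟩
  · calc vnorm (mulVec C y) ≤ (d : ℝ) * (c * vnorm y) := B1
      _ = vnorm y * ((d:ℝ) * c) := by ring
      _ ≤ vnorm y * (K * vnorm (mulVec (transp C) x)) :=
          mul_le_mul_of_nonneg_left B2 hvy.le
      _ = K * (vnorm y * vnorm (mulVec (transp C) x)) := by ring
  · calc vnorm y * vnorm (mulVec (transp C) x) ≤ vnorm y * ((d:ℝ) * c) :=
          mul_le_mul_of_nonneg_left B3 hvy.le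
      _ = (d:ℝ) * (c * vnorm y) := by ring
      _ ≤ K * vnorm (mulVec C y) := B4

/-- Deterministic version of the approximate duality. -/
lemma key_det (hd : 2 ≤ d) {κ : ℝ} (hκ : 1 < κ) (h : ℕ → Mat d)
    (hg : ∀ m, (∀ i j, 0 < h m i j) ∧ ∀ i j i' j', h m i j ≤ κ * h m i' j')
    (n : ℕ) (hn : 1 ≤ n) (x : Fin d → ℝ) (hx : x ∈ sph d) (k : ℕ) (hk : k ≤ n) :
    -(2 * Real.log κ + Real.log d) ≤
        Real.log (vnorm (mulVec (prodL h k) x)) - Real.log (vnorm (mulVec (prodL h n) x)) -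
          (- Real.log (vnorm (mulVec (prodL (fun j => transp (h (n - 1 - j))) (n - k)) x))) ∧
      Real.log (vnorm (mulVec (prodL h k) x)) - Real.log (vnorm (mulVec (prodL h n) x)) -
          (- Real.log (vnorm (mulVec (prodL (fun j => transp (h (n - 1 - j))) (n - k)) x))) ≤
        2 * Real.log κ + Real.log d := by
  have hd0 : 0 < d := by omega
  haveI : Nonempty (Fin d) := Fin.pos_iff_nonempty.mp hd0
  have hκ0 : 0 < κ := lt_trans one_pos hκ
  have hlogκ : 0 ≤ Real.log κ := Real.log_nonneg hκ.le
  have hlogd : 0 ≤ Real.log d := Real.log_nonneg (by exact_mod_cast hd0)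
  rcases eq_or_lt_of_le hk with rfl | hkn
  · -- k = n
    simp only [Nat.sub_self]
    have : prodL (fun j => transp (h (k - 1 - j))) 0 = idMat d := rfl
    rw [this, mulVec_idMat, hx.2, Real.log_one]
    constructor <;> linarith
  · -- k < n
    set m := n - k with hm
    have hm1 : 1 ≤ m := by omega
    set A := prodL h k with hA
    set C := prodL (fun j => h (k + j)) m with hC
    have hprod : prodL h n = matMul C A := by
      have : n = m + k := by omega
      rw [this, prodL_add]
    have htr : prodL (fun j => transp (h (n - 1 - j))) m = transp C := by
      rw [← prodL_transp_rev h m k]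
      apply prodL_congr
      intro j hj
      have e : n - 1 - j = k + (m - 1 - j) := by omega
      rw [e]
    obtain ⟨hCp, hCr, hCc⟩ := prodL_good hd0 hκ0 (fun j => h (k + j)) (fun j => hg (k + j)) m hm1
    have hCrat : ∀ i j i' j', C i j ≤ κ ^ 2 * C i' j' := by
      intro i j i' j'
      calc C i j ≤ κ * C i' j := hCr i i' j
        _ ≤ κ * (κ * C i' j') := mul_le_mul_of_nonneg_left (hCc i' j j') hκ0.le
        _ = κ ^ 2 * C i' j' := by ring
    set y := mulVec A x with hy
    have hAnn : ∀ i j, 0 ≤ A i j := fun i j =>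
      prodL_nonneg h (fun j i i' => ((hg j).1 i i').le) k i j
    have hynn : ∀ i, 0 ≤ y i := mulVec_nonneg hAnn hx.1
    have hx1 : ∑ i, x i = 1 := by rw [← vnorm_eq_sum hx.1]; exact hx.2
    have hvy : 0 < vnorm y := by
      rcases Nat.eq_zero_or_pos k with rfl | hk1
      · have : A = idMat d := rfl
        rw [hy, this, mulVec_idMat, hx.2]; exact one_pos
      · obtain ⟨hAp, -, -⟩ := prodL_good hd0 hκ0 h hg k hk1
        obtain ⟨j0, hj0⟩ : ∃ j, 0 < x j := by
          by_contra hcon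
          push_neg at hcon
          have : (∑ i, x i) ≤ 0 := Finset.sum_nonpos fun i _ => hcon i
          rw [hx1] at this; linarith
        have hyi : 0 < y (Classical.arbitrary (Fin d)) := by
          set i := Classical.arbitrary (Fin d)
          have : A i j0 * x j0 ≤ ∑ j, A i j * x j :=
            Finset.single_le_sum (fun j _ => mul_nonneg (hAnn i j) (hx.1 j))
              (Finset.mem_univ j0)
          have h0 : 0 < A i j0 * x j0 := mul_pos (hAp i j0) hj0
          exact lt_of_lt_of_le h0 this
        have habs : y (Classical.arbitrary (Fin d)) ≤ vnorm y := by
          have h1 : |y (Classical.arbitrary (Fin d))| ≤ ∑ i, |y i| :=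
            Finset.single_le_sum (fun i _ => abs_nonneg (y i))
              (Finset.mem_univ (Classical.arbitrary (Fin d)))
          calc y (Classical.arbitrary (Fin d)) ≤ |y (Classical.arbitrary (Fin d))| :=
                le_abs_self _
            _ ≤ ∑ i, |y i| := h1
            _ = vnorm y := rfl
        exact lt_of_lt_of_le hyi habs
    have hK2 : (0:ℝ) < κ ^ 2 := by positivity
    obtain ⟨S1, S2, hposCt, hposCy⟩ :=
      sandwich hd0 hK2 C hCp hCrat x y hx.1 hx1 hynn hvy
    have hSn : vnorm (mulVec (prodL h n) x) = vnorm (mulVec C y) := by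
      rw [hprod, mulVec_matMul]
    have hSd : vnorm (mulVec (prodL (fun j => transp (h (n - 1 - j))) (n - k)) x)
        = vnorm (mulVec (transp C) x) := by rw [← hm, htr]
    rw [hSn, hSd]
    have hlog1 : Real.log (vnorm (mulVec C y)) ≤
        2 * Real.log κ + (Real.log (vnorm y) + Real.log (vnorm (mulVec (transp C) x))) := by
      have := Real.log_le_log hposCy S1
      rw [Real.log_mul (by positivity) (by positivity), Real.log_mul hvy.ne' hposCt.ne',
        Real.log_pow] at this
      push_cast at this
      linarith
    have hlog2 : Real.log (vnorm y) + Real.log (vnorm (mulVec (transp C) x)) ≤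
        2 * Real.log κ + Real.log (vnorm (mulVec C y)) := by
      have h0 : 0 < vnorm y * vnorm (mulVec (transp C) x) := mul_pos hvy hposCt
      have := Real.log_le_log h0 S2
      rw [Real.log_mul hK2.ne' hposCy.ne', Real.log_pow] at this
      rw [← Real.log_mul hvy.ne' hposCt.ne']
      push_cast at this
      linarith
    constructor <;> linarith

lemma goodSet_measurable (κ : ℝ) :
    MeasurableSet {g : Mat d | (∀ i j, 0 < g i j) ∧ ∀ i j k l, g i j ≤ κ * g k l} := by
  have meval : ∀ i j, Measurable fun g : Mat d => g i j := fun i j =>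
    (measurable_pi_apply j).comp (measurable_pi_apply i)
  have e : {g : Mat d | (∀ i j, 0 < g i j) ∧ ∀ i j k l, g i j ≤ κ * g k l} =
      (⋂ i, ⋂ j, {g : Mat d | 0 < g i j}) ∩
        ⋂ i, ⋂ j, ⋂ k, ⋂ l, {g : Mat d | g i j ≤ κ * g k l} := by
    ext g; simp [Set.mem_iInter]
  rw [e]
  exact ((MeasurableSet.iInter fun i => MeasurableSet.iInter fun j =>
      measurableSet_lt measurable_const (meval i j))).inter
    (MeasurableSet.iInter fun i => MeasurableSet.iInter fun j =>
      MeasurableSet.iInter fun k => MeasurableSet.iInter fun l =>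
        measurableSet_le (meval i j) (measurable_const.mul (meval k l)))

theorem approximate_duality
    (hd : 2 ≤ d) (P : Measure Ω) [IsProbabilityMeasure P]
    (gs : ℕ → Ω → Mat d) (μ : Measure (Mat d)) [IsProbabilityMeasure μ]
    (hiid : IID P gs μ) (hallow : ∀ᵐ g ∂μ, Allow g)
    (κ : ℝ) (hA5 : CondA5 μ κ) :
    ∀ᵐ ω ∂P, ∀ n : ℕ, 1 ≤ n → ∀ x ∈ sph d, ∀ k : ℕ, k ≤ n →
      Sdrev gs n x (n - k) ω - (2 * Real.log κ + Real.log d) ≤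
          Sn gs x k ω - Sn gs x n ω ∧
        Sn gs x k ω - Sn gs x n ω ≤
          Sdrev gs n x (n - k) ω + (2 * Real.log κ + Real.log d) := by
  obtain ⟨hκ, hA5ae⟩ := hA5
  have hGmeas := goodSet_measurable (d := d) κ
  have hm : ∀ m : ℕ, ∀ᵐ ω ∂P,
      (∀ i j, 0 < gs m ω i j) ∧ ∀ i j k l, gs m ω i j ≤ κ * gs m ω k l := by
    intro m
    have h1 : ∀ᵐ g ∂(Measure.map (gs m) P),
        g ∈ {g : Mat d | (∀ i j, 0 < g i j) ∧ ∀ i j k l, g i j ≤ κ * g k l} := by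
      rw [hiid.2.2 m]; exact hA5ae
    exact (MeasureTheory.ae_map_iff (hiid.1 m).aemeasurable hGmeas).mp h1
  have hall : ∀ᵐ ω ∂P, ∀ m : ℕ,
      (∀ i j, 0 < gs m ω i j) ∧ ∀ i j k l, gs m ω i j ≤ κ * gs m ω k l :=
    ae_all_iff.mpr hm
  filter_upwards [hall] with ω hω n hn x hx k hk
  have hdet := key_det hd hκ (fun m => gs m ω) hω n hn x hx k hk
  simp only [Sn, Sdrev]
  exact ⟨by linarith [hdet.1], by linarith [hdet.2]⟩

end PRM
end
end
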